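/- Any single trajectory (curve) in the plane whose r_j-neighborhood covers the region R_j for every j = 1, ..., i (with R_j pairwise disjoint regions of area > 2^{2j}/2 and r_j = 2^{-2(i−j+1)}) has length at least i·2^{2i−1} − i·π/2; in particular at least (1/2)·i·2^{2i} − i·π/2. -/

import Mathlib

open MeasureTheory Real

/-- The axis-aligned closed square of side y centered at the origin of the Euclidean plane. -/
def centSquare (y : ℝ) : Set (EuclideanSpace ℝ (Fin 2)) := {p | |p 0| ≤ y / 2 ∧ |p 1| ≤ y / 2}

/-- The annular regions of the static lower bound: R 1 = Q(2), R k = Q(2^k) \ Q(2^{k-1}). -/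
def annReg (k : ℕ) : Set (EuclideanSpace ℝ (Fin 2)) :=
  if k = 1 then centSquare 2 else centSquare ((2:ℝ) ^ k) \ centSquare ((2:ℝ) ^ (k - 1))

noncomputable section SLBsection

namespace SLB

/-! ### Boxes in the plane -/

/-- closed axis-aligned box with center (a,b) and half-width ρ -/
def box2 (a b ρ : ℝ) : Set (EuclideanSpace ℝ (Fin 2)) :=
  {p | |p 0 - a| ≤ ρ ∧ |p 1 - b| ≤ ρ}

lemma box2_eq (a b ρ : ℝ) : box2 a b ρ = ((MeasurableEquiv.toLp 2 (Fin 2 → ℝ)).symm) ⁻¹'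
    (Set.univ.pi fun k => Set.Icc (![a,b] k - ρ) (![a,b] k + ρ)) := by
  ext p
  have e : ∀ (k : Fin 2), ((MeasurableEquiv.toLp 2 (Fin 2 → ℝ)).symm) p k = p k := fun _ => rfl
  simp only [box2, Set.mem_preimage, Set.mem_pi, Set.mem_univ, forall_true_left, Set.mem_Icc,
    Set.mem_setOf_eq, e, Fin.forall_fin_two]
  simp [abs_le]
  constructor <;> intro h <;> constructor <;> constructor <;> linarith [h.1.1, h.1.2, h.2.1, h.2.2]

lemma measurableSet_box2 (a b ρ : ℝ) : MeasurableSet (box2 a b ρ) := by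
  rw [box2_eq]
  exact ((MeasurableEquiv.toLp 2 (Fin 2 → ℝ)).symm).measurable
    (MeasurableSet.univ_pi fun k => measurableSet_Icc)

lemma vol_box2 (a b ρ : ℝ) :
    volume (box2 a b ρ) = ENNReal.ofReal (2*ρ) * ENNReal.ofReal (2*ρ) := by
  rw [box2_eq, (EuclideanSpace.volume_preserving_symm_measurableEquiv_toLp (Fin 2)).measure_preimage
    (MeasurableSet.univ_pi fun k => measurableSet_Icc).nullMeasurableSet]
  rw [volume_pi_pi, Fin.prod_univ_two]
  simp only [Real.volume_Icc]
  congr 1 <;> congr 1 <;> ring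

lemma vol_box2' (a b ρ : ℝ) (hρ : 0 ≤ ρ) :
    volume (box2 a b ρ) = ENNReal.ofReal (4*ρ^2) := by
  rw [vol_box2, ← ENNReal.ofReal_mul (by linarith)]
  congr 1; ring

lemma box2_subset (a b a' b' ρ η : ℝ) (h0 : |a - a'| ≤ η) (h1 : |b - b'| ≤ η) :
    box2 a b (ρ - η) ⊆ box2 a' b' ρ := by
  rintro p ⟨hp0, hp1⟩
  constructor
  · calc |p 0 - a'| ≤ |p 0 - a| + |a - a'| := abs_sub_le _ _ _
      _ ≤ (ρ - η) + η := add_le_add hp0 h0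
      _ = ρ := by ring
  · calc |p 1 - b'| ≤ |p 1 - b| + |b - b'| := abs_sub_le _ _ _
      _ ≤ (ρ - η) + η := add_le_add hp1 h1
      _ = ρ := by ring

lemma vol_box2_diff (a b a' b' ρ δ : ℝ) (hδ : 0 ≤ δ) (hρ : δ ≤ ρ)
    (h0 : |a - a'| ≤ δ) (h1 : |b - b'| ≤ δ) :
    volume (box2 a b ρ \ box2 a' b' ρ) ≤ ENNReal.ofReal (4*ρ*δ) := by
  set M : Set (EuclideanSpace ℝ (Fin 2)) := box2 ((a+a')/2) ((b+b')/2) (ρ - δ/2) with hM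
  have habs : |(a+a')/2 - a| ≤ δ/2 ∧ |(a+a')/2 - a'| ≤ δ/2 ∧
      |(b+b')/2 - b| ≤ δ/2 ∧ |(b+b')/2 - b'| ≤ δ/2 := by
    rw [abs_le, abs_le, abs_le, abs_le]
    rw [abs_le] at h0 h1
    refine ⟨⟨?_,?_⟩,⟨?_,?_⟩,⟨?_,?_⟩,?_,?_⟩ <;> linarith [h0.1, h0.2, h1.1, h1.2]
  have hMD' : M ⊆ box2 a' b' ρ := by
    have := box2_subset ((a+a')/2) ((b+b')/2) a' b' ρ (δ/2) habs.2.1 habs.2.2.2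
    simpa using this
  have hsub : box2 a b ρ \ box2 a' b' ρ ⊆ box2 a b ρ \ M := Set.diff_subset_diff_right hMD'
  refine (measure_mono hsub).trans ?_
  have hMD : M ⊆ box2 a b ρ := box2_subset _ _ a b ρ (δ/2) habs.1 habs.2.2.1
  have hdiff : volume (box2 a b ρ \ M) = volume (box2 a b ρ) - volume M :=
    measure_diff hMD (measurableSet_box2 _ _ _).nullMeasurableSet
      (by rw [vol_box2]; exact ENNReal.mul_ne_top ENNReal.ofReal_ne_top ENNReal.ofReal_ne_top)
  rw [hdiff, vol_box2' _ _ _ (by linarith), hM, vol_box2' _ _ _ (by linarith)]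
  rw [tsub_le_iff_right, ← ENNReal.ofReal_add (by nlinarith) (by nlinarith)]
  apply ENNReal.ofReal_le_ofReal
  nlinarith [sq_nonneg δ]

lemma coord_le_dist (p q : EuclideanSpace ℝ (Fin 2)) (k : Fin 2) : |p k - q k| ≤ dist p q := by
  rw [EuclideanSpace.dist_eq]
  have h : |p k - q k| = Real.sqrt ((p k - q k)^2) := (Real.sqrt_sq_eq_abs _).symm
  rw [h]
  apply Real.sqrt_le_sqrt
  rw [Fin.sum_univ_two]
  fin_cases k <;> simp [Real.dist_eq, sq_abs] <;> positivity

/-! ### The radii and the shrunk regions -/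

/-- the radius r_j = 4^(j-i-1) -/
def rr (i j : ℕ) : ℝ := (4:ℝ) ^ ((j:ℤ) - i - 1)

lemma rr_pos (i j : ℕ) : 0 < rr i j := zpow_pos (by norm_num) _

lemma rr_eq (i j : ℕ) : (2:ℝ) ^ (-(2 * ((i:ℤ) - j + 1))) = rr i j := by
  rw [rr, show ((4:ℝ)) = (2:ℝ)^(2:ℤ) by norm_num, ← zpow_mul]
  congr 1; ring

lemma rr_le_quarter (i j : ℕ) (h : j ≤ i) : rr i j ≤ 1/4 := by
  rw [rr, show (1/4 : ℝ) = (4:ℝ)^(-1 : ℤ) by norm_num]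
  apply zpow_le_zpow_right₀ (by norm_num); omega

lemma rr_mono (i j : ℕ) (h : 1 ≤ j) : rr i 1 ≤ rr i j := by
  apply zpow_le_zpow_right₀ (by norm_num); omega

lemma rr_mul (i j : ℕ) : rr i j * (4:ℝ)^(i:ℕ) * 4 = ((2:ℝ)^(j:ℕ))^2 := by
  have h40 : (4:ℝ) ≠ 0 := by norm_num
  have h4 : ((4:ℝ))^(i:ℕ) = (4:ℝ)^(i:ℤ) := (zpow_natCast _ _).symm
  have hj : ((2:ℝ)^(j:ℕ))^2 = (4:ℝ)^(j:ℤ) := by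
    rw [← pow_mul, mul_comm, pow_mul]
    norm_num
  rw [h4, hj, rr, ← zpow_add₀ h40, ← zpow_add_one₀ h40]
  congr 1; ring

lemma rr_one (i : ℕ) : rr i 1 * (4:ℝ)^(i:ℕ) = 1 := by
  have := rr_mul i 1
  norm_num at this
  linarith

/-- inner threshold of the shrunk region: 0 for j = 1, else 2^j/4 + (3/2) r_j -/
def inb (i j : ℕ) : ℝ := if j = 1 then 0 else (2:ℝ)^(j:ℕ)/4 + (3/2) * rr i j

/-- the shrunk region K_j inside R_j -/
def KK (i j : ℕ) : Set (EuclideanSpace ℝ (Fin 2)) :=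
  {p | max |p 0| |p 1| ≤ (2:ℝ)^(j:ℕ)/2 - (3/2) * rr i j ∧ inb i j ≤ max |p 0| |p 1|}

lemma KK_subset_annReg (i j : ℕ) (hj : 1 ≤ j) : KK i j ⊆ annReg j := by
  rintro p ⟨h1, h2⟩
  have hr := rr_pos i j
  have hmax0 : |p 0| ≤ max |p 0| |p 1| := le_max_left _ _
  have hmax1 : |p 1| ≤ max |p 0| |p 1| := le_max_right _ _
  by_cases hj1 : j = 1
  · subst hj1
    simp only [annReg, if_pos rfl, centSquare, Set.mem_setOf_eq]
    norm_num at h1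
    constructor <;> [skip; skip] <;> norm_num <;> linarith
  · simp only [annReg, if_neg hj1, centSquare, Set.mem_diff, Set.mem_setOf_eq]
    have hpow : ((2:ℝ) ^ (j-1 : ℕ)) = (2:ℝ)^(j:ℕ)/2 := by
      rw [eq_div_iff (by norm_num : (2:ℝ) ≠ 0), ← pow_succ]
      congr 1; omega
    constructor
    · constructor <;> linarith
    · rw [hpow, inb, if_neg hj1] at *
      rintro ⟨g1, g2⟩
      have : max |p 0| |p 1| ≤ (2:ℝ)^(j:ℕ)/2/2 := max_le g1 g2
      linarith

/-- lower bound for the area of K_j -/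
def vK (i j : ℕ) : ℝ :=
  if j = 1 then (2 - 3 * rr i 1)^2
  else ((2:ℝ)^(j:ℕ) - 3 * rr i j)^2 - ((2:ℝ)^(j:ℕ)/2 + 3 * rr i j)^2

lemma box2_max (ρ : ℝ) : box2 0 0 ρ = {p : EuclideanSpace ℝ (Fin 2) | max |p 0| |p 1| ≤ ρ} := by
  ext p; simp [box2, max_le_iff]

lemma vol_KK (i j : ℕ) (hj : 1 ≤ j) (hji : j ≤ i) :
    ENNReal.ofReal (vK i j) ≤ volume (KK i j) := by
  have hr := rr_pos i j
  have hq := rr_le_quarter i j hji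
  by_cases hj1 : j = 1
  · subst hj1
    have hsub : box2 0 0 (1 - (3/2) * rr i 1) ⊆ KK i 1 := by
      rw [box2_max]
      rintro p hp
      simp only [Set.mem_setOf_eq] at hp
      constructor
      · norm_num
        constructor <;> linarith [le_max_left |p 0| |p 1|, le_max_right |p 0| |p 1|]
      · rw [inb, if_pos rfl]
        positivity
    refine le_trans ?_ (measure_mono hsub)
    rw [vol_box2' 0 0 _ (by linarith), vK, if_pos rfl]
    apply ENNReal.ofReal_le_ofReal
    nlinarith
  · have hj2 : 2 ≤ j := by omega
    have h2j : (4:ℝ) ≤ (2:ℝ)^(j:ℕ) := by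
      calc (4:ℝ) = 2^2 := by norm_num
      _ ≤ 2^(j:ℕ) := pow_le_pow_right₀ (by norm_num) hj2
    set A := (2:ℝ)^(j:ℕ)/2 - (3/2) * rr i j with hA
    set B := (2:ℝ)^(j:ℕ)/4 + (3/2) * rr i j with hB
    have hB0 : 0 ≤ B := by positivity
    have hAB : B ≤ A := by
      rw [hA, hB]
      have : (3:ℝ) * rr i j ≤ 3/4 := by linarith
      nlinarith
    have hsub : box2 0 0 A \ box2 0 0 B ⊆ KK i j := by
      rw [box2_max, box2_max]
      rintro p ⟨hp1, hp2⟩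
      simp only [Set.mem_setOf_eq, not_le] at hp1 hp2
      exact ⟨hp1, by rw [inb, if_neg hj1]; exact le_of_lt hp2⟩
    refine le_trans ?_ (measure_mono hsub)
    have key : volume (box2 0 0 A) ≤ ENNReal.ofReal (4*B^2) +
        volume (box2 (0:ℝ) 0 A \ box2 0 0 B) := by
      calc volume (box2 0 0 A) ≤ volume (box2 0 0 A ∩ box2 0 0 B) +
            volume (box2 (0:ℝ) 0 A \ box2 0 0 B) := measure_le_inter_add_diff _ _ _
        _ ≤ ENNReal.ofReal (4*B^2) + volume (box2 (0:ℝ) 0 A \ box2 0 0 B) := by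
            gcongr
            rw [← vol_box2' 0 0 B hB0]
            exact measure_mono Set.inter_subset_right
    rw [vol_box2' 0 0 A (by linarith)] at key
    have hvk : vK i j = 4*A^2 - 4*B^2 := by
      rw [vK, if_neg hj1, hA, hB]; ring
    rw [hvk]
    have h1 : ENNReal.ofReal (4*A^2 - 4*B^2) + ENNReal.ofReal (4*B^2) =
        ENNReal.ofReal (4*A^2) := by
      rw [← ENNReal.ofReal_add (by nlinarith) (by positivity)]
      congr 1; ring
    rw [← h1, add_comm (ENNReal.ofReal (4*A^2 - 4*B^2))] at key
    exact (ENNReal.add_le_add_iff_left ENNReal.ofReal_ne_top).mp key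

/-- separation between distinct shrunk regions -/
lemma KK_sep (i j l : ℕ) (hl : 1 ≤ l) (hlj : l < j)
    (p q : EuclideanSpace ℝ (Fin 2)) (hp : p ∈ KK i j) (hq : q ∈ KK i l) :
    (3/2) * (rr i j + rr i l) ≤ max |p 0 - q 0| |p 1 - q 1| := by
  obtain ⟨hp1, hp2⟩ := hp
  obtain ⟨hq1, hq2⟩ := hq
  rw [inb, if_neg (by omega : ¬ j = 1)] at hp2
  have h2l : (2:ℝ)^(l:ℕ)/2 ≤ (2:ℝ)^(j:ℕ)/4 := by
    have : (2:ℝ)^(l+1:ℕ) ≤ (2:ℝ)^(j:ℕ) := pow_le_pow_right₀ (by norm_num) (by omega)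
    rw [pow_succ] at this
    linarith
  have hMle : max |p 0| |p 1| ≤ max |q 0| |q 1| + max |p 0 - q 0| |p 1 - q 1| := by
    apply max_le
    · calc |p 0| ≤ |q 0| + |p 0 - q 0| := by
            have := abs_sub_abs_le_abs_sub (p 0) (q 0); linarith [abs_nonneg (p 0 - q 0)]
        _ ≤ _ := add_le_add (le_max_left _ _) (le_max_left _ _)
    · calc |p 1| ≤ |q 1| + |p 1 - q 1| := by
            have := abs_sub_abs_le_abs_sub (p 1) (q 1); linarith [abs_nonneg (p 1 - q 1)]
        _ ≤ _ := add_le_add (le_max_right _ _) (le_max_right _ _)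
  linarith

/-! ### Numeric estimates -/

section Numeric

variable {i : ℕ} {δ : ℝ}

lemma hApos (i : ℕ) : (0:ℝ) < (4:ℝ)^(i:ℕ) := by positivity

lemma hA4 (i : ℕ) (hi : 1 ≤ i) : (4:ℝ) ≤ (4:ℝ)^(i:ℕ) := by
  calc (4:ℝ) = 4^(1:ℕ) := by norm_num
  _ ≤ 4^(i:ℕ) := pow_le_pow_right₀ (by norm_num) hi

lemma hδA2 (hδ₀ : δ ≤ ((4:ℝ)^(i:ℕ))⁻¹ * ((4:ℝ)^(i:ℕ))⁻¹) :
    δ * ((4:ℝ)^(i:ℕ))^2 ≤ 1 := by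
  have h := hApos i
  rw [show (((4:ℝ)^(i:ℕ))⁻¹ * ((4:ℝ)^(i:ℕ))⁻¹) = (((4:ℝ)^(i:ℕ))^2)⁻¹ by ring] at hδ₀
  calc δ * ((4:ℝ)^(i:ℕ))^2 ≤ (((4:ℝ)^(i:ℕ))^2)⁻¹ * ((4:ℝ)^(i:ℕ))^2 := by
        apply mul_le_mul_of_nonneg_right hδ₀ (by positivity)
  _ = 1 := by field_simp

lemma term_j_ge (i j : ℕ) (hi : 1 ≤ i) (h2 : 2 ≤ j) (hji : j ≤ i) (δ : ℝ) (hδ : 0 ≤ δ)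
    (hδ₀ : δ ≤ ((4:ℝ)^(i:ℕ))⁻¹ * ((4:ℝ)^(i:ℕ))⁻¹) :
    (3/4)*(4:ℝ)^(i:ℕ) - (9/4)*(2:ℝ)^(j:ℕ) - 1/2 ≤
      (vK i j - 4*(rr i j + δ)^2) / (4*(rr i j + δ)) := by
  set A := (4:ℝ)^(i:ℕ) with hA
  set a := (2:ℝ)^(j:ℕ) with ha
  set R := rr i j with hR
  have hRpos : 0 < R := rr_pos i j
  have hR4 : R ≤ 1/4 := rr_le_quarter i j hji
  have hApos' : (0:ℝ) < A := hApos i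
  have hA4' : (4:ℝ) ≤ A := hA4 i hi
  have ha4 : (4:ℝ) ≤ a := by
    rw [ha]
    calc (4:ℝ) = 2^(2:ℕ) := by norm_num
    _ ≤ 2^(j:ℕ) := pow_le_pow_right₀ (by norm_num) h2
  have hRAeq : R * A * 4 = a^2 := rr_mul i j
  have hδA2' : δ * A^2 ≤ 1 := hδA2 hδ₀
  have hδA1 : δ * A ≤ 1/4 := by nlinarith
  have hδ1 : δ ≤ 1 := by nlinarith
  have hRA : 4 ≤ R * A := by nlinarith
  have key : 3*A*δ + 4*δ^2 ≤ R := by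
    have h1 : (3*A*δ + 4*δ^2) * A ≤ R * A := by nlinarith
    exact le_of_mul_le_mul_right h1 hApos'
  rw [le_div_iff₀ (by positivity)]
  rw [vK, if_neg (by omega : ¬ j = 1), ← ha, ← hR]
  nlinarith [mul_nonneg hδ (by linarith : (0:ℝ) ≤ a),
    mul_nonneg (by linarith : (0:ℝ) ≤ 1 - 4*R) hRpos.le,
    mul_nonneg hδ hRpos.le, sq_nonneg δ]

lemma term_1_ge (i : ℕ) (hi : 1 ≤ i) (δ : ℝ) (hδ : 0 ≤ δ)
    (hδ₀ : δ ≤ ((4:ℝ)^(i:ℕ))⁻¹ * ((4:ℝ)^(i:ℕ))⁻¹) :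
    (4:ℝ)^(i:ℕ) - 9/2 ≤ (vK i 1 - 4*(rr i 1 + δ)^2) / (4*(rr i 1 + δ)) := by
  set A := (4:ℝ)^(i:ℕ) with hA
  set R := rr i 1 with hR
  have hRpos : 0 < R := rr_pos i 1
  have hR4 : R ≤ 1/4 := rr_le_quarter i 1 hi
  have hApos' : (0:ℝ) < A := hApos i
  have hA4' : (4:ℝ) ≤ A := hA4 i hi
  have hRA1 : R * A = 1 := rr_one i
  have hδA2' : δ * A^2 ≤ 1 := hδA2 hδ₀
  have hδ1 : δ ≤ 1 := by nlinarith
  have key1 : 4*A*δ ≤ 4*R := by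
    have h1 : (4*A*δ) * A ≤ (4*R) * A := by nlinarith
    exact le_of_mul_le_mul_right h1 hApos'
  rw [le_div_iff₀ (by positivity)]
  rw [vK, if_pos rfl, ← hR]
  nlinarith [mul_nonneg hδ hRpos.le, sq_nonneg δ, sq_nonneg R]

lemma geom_sum (i : ℕ) (hi : 2 ≤ i) :
    ∑ j ∈ Finset.Icc 2 i, (2:ℝ)^(j:ℕ) = 2^(i+1:ℕ) - 4 := by
  induction i, hi using Nat.le_induction with
  | base => norm_num
  | succ k hk ih =>
    rw [Finset.sum_Icc_succ_top (by omega : 2 ≤ k + 1), ih]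
    rw [pow_succ, pow_succ]
    ring

lemma numeric_main (i : ℕ) (hi : 1 ≤ i) (δ : ℝ) (hδ : 0 ≤ δ)
    (hδ₀ : δ ≤ ((4:ℝ)^(i:ℕ))⁻¹ * ((4:ℝ)^(i:ℕ))⁻¹) :
    (i:ℝ) * (4:ℝ)^(i:ℕ) / 2 - i * π / 2 ≤
      ∑ j ∈ Finset.Icc 1 i, (vK i j - 4*(rr i j + δ)^2) / (4*(rr i j + δ)) := by
  have hπ := Real.pi_gt_three
  rcases eq_or_lt_of_le hi with h1 | h2
  · rcases h1 with rfl | _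
    rw [show Finset.Icc 1 1 = {1} from rfl, Finset.sum_singleton]
    have hr : rr 1 1 = 1/4 := by norm_num [rr]
    have hδ' : δ ≤ 1/16 := by norm_num at hδ₀; linarith
    rw [vK, if_pos rfl, hr]
    rw [le_div_iff₀ (by norm_num; linarith)]
    push_cast
    nlinarith [mul_nonneg (by linarith : (0:ℝ) ≤ π - 3) (by linarith : (0:ℝ) ≤ 1/4 + δ),
      sq_nonneg δ]
  · have hi2 : 2 ≤ i := h2
    have hsplit : Finset.Icc 1 i = insert 1 (Finset.Icc 2 i) := by
      ext k; simp only [Finset.mem_Icc, Finset.mem_insert]; omega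
    rw [hsplit, Finset.sum_insert (by simp)]
    have hsum : ∑ j ∈ Finset.Icc 2 i, ((3/4)*(4:ℝ)^(i:ℕ) - (9/4)*(2:ℝ)^(j:ℕ) - 1/2) ≤
        ∑ j ∈ Finset.Icc 2 i, (vK i j - 4*(rr i j + δ)^2) / (4*(rr i j + δ)) := by
      apply Finset.sum_le_sum
      intro j hj
      simp only [Finset.mem_Icc] at hj
      exact term_j_ge i j hi hj.1 hj.2 δ hδ hδ₀
    have hsum2 : ∑ j ∈ Finset.Icc 2 i, ((3/4)*(4:ℝ)^(i:ℕ) - (9/4)*(2:ℝ)^(j:ℕ) - 1/2)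
        = ((i:ℝ) - 1) * ((3/4)*(4:ℝ)^(i:ℕ) - 1/2) - (9/4)*(2^(i+1:ℕ) - 4) := by
      rw [Finset.sum_sub_distrib, Finset.sum_sub_distrib, Finset.sum_const, Finset.sum_const,
        ← Finset.mul_sum, geom_sum i hi2, Nat.card_Icc, nsmul_eq_mul, nsmul_eq_mul]
      have : ((i + 1 - 2 : ℕ) : ℝ) = (i:ℝ) - 1 := by
        have h' : (i + 1 - 2 : ℕ) = i - 1 := by omega
        rw [h', Nat.cast_sub hi]; norm_num
      rw [this]
      ring_nf
    have ht1 := term_1_ge i hi δ hδ hδ₀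
    set A := (4:ℝ)^(i:ℕ) with hA
    set a := (2:ℝ)^(i:ℕ) with ha
    have haA : a^2 = A := by
      rw [ha, hA, ← pow_mul, mul_comm, pow_mul]; norm_num
    have ha4 : (4:ℝ) ≤ a := by
      rw [ha]
      calc (4:ℝ) = 2^(2:ℕ) := by norm_num
      _ ≤ 2^(i:ℕ) := pow_le_pow_right₀ (by norm_num) hi2
    have hii : (2:ℝ) ≤ (i:ℝ) := by exact_mod_cast hi2
    have h2i1 : (2:ℝ)^(i+1:ℕ) = 2*a := by rw [ha, pow_succ]; ring
    rw [h2i1] at hsum2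
    rw [hsum2] at hsum
    have hgoal : (i:ℝ) * A / 2 - i * π / 2 ≤ (A - 9/2) +
        (((i:ℝ) - 1) * ((3/4)*A - 1/2) - (9/4)*(2*a - 4)) := by
      nlinarith [mul_nonneg (by linarith : (0:ℝ) ≤ (i:ℝ) - 2) (by nlinarith : (0:ℝ) ≤ A - 16),
        sq_nonneg (a - 4), mul_nonneg (by linarith : (0:ℝ) ≤ (i:ℝ)) (by linarith : (0:ℝ) ≤ π - 3)]
    linarith

end Numeric

end SLB

end SLBsection

set_option maxHeartbeats 2000000 in
/-- Any single curve of length x (a 1-Lipschitz map on [0,x]) whose r_j-neighborhood,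
with r_j = 2^{-2(i-j+1)}, covers R_j for every j = 1,…,i has length at least
i·2^{2i-1} − i·π/2 = (1/2)·i·2^{2i} − i·π/2. -/
theorem static_lower_bound (i : ℕ) (hi : 1 ≤ i) (x : ℝ) (hx : 0 ≤ x)
    (γ : ℝ → EuclideanSpace ℝ (Fin 2)) (hγ : LipschitzOnWith 1 γ (Set.Icc 0 x))
    (hcover : ∀ j ∈ Finset.Icc 1 i, ∀ p ∈ annReg j,
      ∃ t ∈ Set.Icc (0:ℝ) x, dist p (γ t) ≤ (2:ℝ) ^ (-(2 * ((i:ℤ) - j + 1)))) :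
    (i : ℝ) * (2:ℝ) ^ (2 * (i:ℤ) - 1) - (i : ℝ) * π / 2 ≤ x ∧
    (1/2 : ℝ) * (i : ℝ) * (2:ℝ) ^ (2 * i) - (i : ℝ) * π / 2 ≤ x := by
  classical
  open SLB in
  -- rewrite the two goals into a common form
  have hzpow : (2:ℝ) ^ (2 * (i:ℤ) - 1) = (4:ℝ)^(i:ℕ) / 2 := by
    rw [zpow_sub₀ (by norm_num : (2:ℝ) ≠ 0), zpow_one]
    congr 1
    rw [show (2 * (i:ℤ)) = ((2*i : ℕ) : ℤ) by push_cast; ring, zpow_natCast,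
      pow_mul]
    norm_num
  have hpow : (2:ℝ) ^ (2 * i : ℕ) = (4:ℝ)^(i:ℕ) := by
    rw [pow_mul]; norm_num
  have hmain : (i:ℝ) * (4:ℝ)^(i:ℕ) / 2 - i * π / 2 ≤ x := by
    have hApos' : (0:ℝ) < (4:ℝ)^(i:ℕ) := by positivity
    set δ₀ : ℝ := ((4:ℝ)^(i:ℕ))⁻¹ * ((4:ℝ)^(i:ℕ))⁻¹ with hδ₀def
    have hδ₀pos : 0 < δ₀ := by positivity
    obtain ⟨n, hn1, hδle⟩ : ∃ n : ℕ, 1 ≤ n ∧ x / n ≤ δ₀ := by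
      refine ⟨max 1 ⌈x/δ₀⌉₊, le_max_left _ _, ?_⟩
      have hn0 : (0:ℝ) < ((max 1 ⌈x/δ₀⌉₊ : ℕ) : ℝ) := by
        have : (1:ℕ) ≤ max 1 ⌈x/δ₀⌉₊ := le_max_left _ _
        exact_mod_cast Nat.lt_of_lt_of_le Nat.zero_lt_one this
      rw [div_le_iff₀ hn0]
      have h1 : x/δ₀ ≤ (⌈x/δ₀⌉₊ : ℝ) := Nat.le_ceil _
      have h2 : ((⌈x/δ₀⌉₊ : ℕ) : ℝ) ≤ ((max 1 ⌈x/δ₀⌉₊ : ℕ) : ℝ) := by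
        exact_mod_cast le_max_right 1 ⌈x/δ₀⌉₊
      calc x = (x/δ₀) * δ₀ := by field_simp
        _ ≤ ((max 1 ⌈x/δ₀⌉₊ : ℕ):ℝ) * δ₀ := by
            apply mul_le_mul_of_nonneg_right (h1.trans h2) hδ₀pos.le
        _ = δ₀ * ((max 1 ⌈x/δ₀⌉₊ : ℕ):ℝ) := by ring
    set δ := x / n with hδdef
    have hδ0 : 0 ≤ δ := div_nonneg hx n.cast_nonneg
    have hnR : (0:ℝ) < n := by exact_mod_cast hn1
    have hnδ : (n:ℝ) * δ = x := by rw [hδdef]; field_simp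
    set c : ℕ → EuclideanSpace ℝ (Fin 2) := fun k => γ ((k:ℝ) * δ) with hc
    set ρ : ℕ → ℝ := fun j => SLB.rr i j + δ with hρ
    have hρpos : ∀ j, 0 < ρ j := fun j => by
      have := SLB.rr_pos i j; simp only [hρ]; linarith
    -- time points lie in [0,x]
    have htmem : ∀ k : ℕ, k ≤ n → ((k:ℝ) * δ) ∈ Set.Icc (0:ℝ) x := by
      intro k hk
      constructor
      · positivity
      · rw [← hnδ]
        apply mul_le_mul_of_nonneg_right _ hδ0
        exact_mod_cast hk
    -- Lipschitz bound
    have hlip : ∀ s ∈ Set.Icc (0:ℝ) x, ∀ t ∈ Set.Icc (0:ℝ) x,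
        dist (γ s) (γ t) ≤ |s - t| := by
      intro s hs t ht
      have := hγ.dist_le_mul s hs t ht
      simpa [Real.dist_eq] using this
    -- consecutive closeness
    have hcc : ∀ k : ℕ, 1 ≤ k → k ≤ n → ∀ u : Fin 2, |c k u - c (k-1) u| ≤ δ := by
      intro k hk1 hkn u
      have h1 : |c k u - c (k-1) u| ≤ dist (c k) (c (k-1)) := SLB.coord_le_dist _ _ u
      refine h1.trans ?_
      have h2 := hlip ((k:ℝ)*δ) (htmem k hkn) (((k-1:ℕ):ℝ)*δ) (htmem (k-1) (by omega))
      have hcast : ((k-1:ℕ):ℝ) = (k:ℝ) - 1 := by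
        rw [Nat.cast_sub hk1]; norm_num
      rw [hcast] at h2
      calc dist (c k) (c (k-1)) ≤ |(k:ℝ)*δ - ((k:ℝ)-1)*δ| := by
            simpa [hc, hcast] using h2
        _ = |δ| := by ring_nf
        _ = δ := abs_of_nonneg hδ0
    -- locating a time in the subdivision
    have hfind : ∀ t, t ∈ Set.Icc (0:ℝ) x →
        ∃ k : ℕ, k < n ∧ (k:ℝ)*δ ≤ t ∧ t ≤ ((k:ℝ)+1)*δ := by
      rintro t ⟨ht0, htx⟩
      rcases eq_or_lt_of_le hδ0 with hδz | hδpos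
      · have hx0 : x = 0 := by rw [← hnδ, ← hδz]; ring
        have ht : t = 0 := le_antisymm (hx0 ▸ htx) ht0
        exact ⟨0, by omega, by simp [ht, ← hδz], by simp [ht, ← hδz]⟩
      · have htδ0 : 0 ≤ t/δ := div_nonneg ht0 hδpos.le
        by_cases hK : ⌊t/δ⌋₊ < n
        · refine ⟨⌊t/δ⌋₊, hK, ?_, ?_⟩
          · have := Nat.floor_le htδ0
            calc ((⌊t/δ⌋₊:ℕ):ℝ)*δ ≤ (t/δ)*δ := mul_le_mul_of_nonneg_right this hδ0
              _ = t := by field_simp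
          · have := (Nat.lt_floor_add_one (t/δ)).le
            calc t = (t/δ)*δ := by field_simp
              _ ≤ (((⌊t/δ⌋₊:ℕ):ℝ)+1)*δ := mul_le_mul_of_nonneg_right this hδ0
        · push_neg at hK
          have hcast : ((n-1:ℕ):ℝ) = (n:ℝ) - 1 := by rw [Nat.cast_sub hn1]; norm_num
          have hnt : (n:ℝ) ≤ t/δ := le_trans (by exact_mod_cast hK) (Nat.floor_le htδ0)
          have h3 : (n:ℝ)*δ ≤ t := by
            calc (n:ℝ)*δ ≤ (t/δ)*δ := mul_le_mul_of_nonneg_right hnt hδ0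
              _ = t := by field_simp
          refine ⟨n-1, by omega, ?_, ?_⟩
          · rw [hcast]; nlinarith
          · rw [hcast]; rw [← hnδ] at htx; linarith
    -- the index sets
    set S : ℕ → Finset ℕ := fun j => (Finset.range n).filter
      (fun k => ∃ p ∈ SLB.KK i j, |c k 0 - p 0| ≤ ρ j ∧ |c k 1 - p 1| ≤ ρ j) with hS
    -- covering of KK by boxes at subdivision points
    have hcov : ∀ j, 1 ≤ j → j ≤ i → ∀ p ∈ SLB.KK i j,
        ∃ k, k < n ∧ p ∈ SLB.box2 (c k 0) (c k 1) (ρ j) := by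
      intro j hj1 hji p hp
      obtain ⟨t, htI, htd⟩ := hcover j (Finset.mem_Icc.mpr ⟨hj1, hji⟩) p
        (SLB.KK_subset_annReg i j hj1 hp)
      rw [SLB.rr_eq] at htd
      obtain ⟨k, hkn, hk1, hk2⟩ := hfind t htI
      have hdistc : dist (γ t) (c k) ≤ δ := by
        have h2 := hlip t htI ((k:ℝ)*δ) (htmem k hkn.le)
        refine h2.trans ?_
        rw [abs_le]; constructor <;> nlinarith
      refine ⟨k, hkn, ?_, ?_⟩
      · calc |p 0 - c k 0| ≤ |p 0 - γ t 0| + |γ t 0 - c k 0| := abs_sub_le _ _ _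
          _ ≤ dist p (γ t) + dist (γ t) (c k) :=
              add_le_add (SLB.coord_le_dist _ _ 0) (SLB.coord_le_dist _ _ 0)
          _ ≤ SLB.rr i j + δ := add_le_add htd hdistc
      · calc |p 1 - c k 1| ≤ |p 1 - γ t 1| + |γ t 1 - c k 1| := abs_sub_le _ _ _
          _ ≤ dist p (γ t) + dist (γ t) (c k) :=
              add_le_add (SLB.coord_le_dist _ _ 1) (SLB.coord_le_dist _ _ 1)
          _ ≤ SLB.rr i j + δ := add_le_add htd hdistc
    -- per-region measure estimate, real form
    have hreg : ∀ j, 1 ≤ j → j ≤ i →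
        SLB.vK i j ≤ 4*(ρ j)^2 + (((S j).erase 0).card : ℝ) * (4 * ρ j * δ) := by
      intro j hj1 hji
      have hincl : SLB.KK i j ⊆ SLB.box2 (c 0 0) (c 0 1) (ρ j) ∪
          ⋃ k ∈ (S j).erase 0,
            (SLB.box2 (c k 0) (c k 1) (ρ j) \ SLB.box2 (c (k-1) 0) (c (k-1) 1) (ρ j)) := by
        intro p hp
        have hex : ∃ m : ℕ, m < n ∧ p ∈ SLB.box2 (c m 0) (c m 1) (ρ j) := by
          obtain ⟨k, hkn, hpk⟩ := hcov j hj1 hji p hp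
          exact ⟨k, hkn, hpk⟩
        have hmn := (Nat.find_spec hex).1
        have hpm := (Nat.find_spec hex).2
        by_cases hm0 : Nat.find hex = 0
        · left; rw [hm0] at hpm; exact hpm
        · right
          have hmS : Nat.find hex ∈ (S j).erase 0 := by
            refine Finset.mem_erase.mpr ⟨hm0, ?_⟩
            rw [hS]
            refine Finset.mem_filter.mpr ⟨Finset.mem_range.mpr hmn, ⟨p, hp, ?_, ?_⟩⟩
            · rw [abs_sub_comm]; exact hpm.1
            · rw [abs_sub_comm]; exact hpm.2
          refine Set.mem_biUnion hmS ⟨hpm, ?_⟩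
          intro hcontra
          exact (Nat.find_min hex (by omega : Nat.find hex - 1 < Nat.find hex))
            ⟨by omega, hcontra⟩
      have hvol : volume (SLB.KK i j) ≤ ENNReal.ofReal (4*(ρ j)^2) +
          (((S j).erase 0).card : ENNReal) * ENNReal.ofReal (4 * ρ j * δ) := by
        refine (measure_mono hincl).trans ?_
        refine (measure_union_le _ _).trans ?_
        have h1 : volume (SLB.box2 (c 0 0) (c 0 1) (ρ j)) = ENNReal.ofReal (4*(ρ j)^2) :=
          SLB.vol_box2' _ _ _ (hρpos j).le
        rw [h1]
        gcongr
        refine (measure_biUnion_finset_le _ _).trans ?_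
        have hterm : ∀ k ∈ (S j).erase 0,
            volume (SLB.box2 (c k 0) (c k 1) (ρ j) \ SLB.box2 (c (k-1) 0) (c (k-1) 1) (ρ j))
              ≤ ENNReal.ofReal (4 * ρ j * δ) := by
          intro k hk
          have hk0 : k ≠ 0 := (Finset.mem_erase.mp hk).1
          have hkn : k < n := Finset.mem_range.mp (Finset.mem_filter.mp
            ((Finset.mem_erase.mp hk).2)).1
          apply SLB.vol_box2_diff _ _ _ _ _ _ hδ0
          · simp only [hρ]; linarith [SLB.rr_pos i j]
          · exact hcc k (by omega) hkn.le 0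
          · exact hcc k (by omega) hkn.le 1
        refine (Finset.sum_le_sum hterm).trans ?_
        rw [Finset.sum_const, nsmul_eq_mul]
      have hq1 : (0:ℝ) ≤ 4*(ρ j)^2 := mul_nonneg (by norm_num) (sq_nonneg _)
      have hq2 : (0:ℝ) ≤ 4 * ρ j * δ :=
        mul_nonneg (mul_nonneg (by norm_num) (hρpos j).le) hδ0
      have hq3 : (0:ℝ) ≤ (((S j).erase 0).card : ℝ) := Nat.cast_nonneg _
      have hvol2 : ENNReal.ofReal (SLB.vK i j) ≤
          ENNReal.ofReal (4*(ρ j)^2 + (((S j).erase 0).card : ℝ) * (4 * ρ j * δ)) := by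
        refine (SLB.vol_KK i j hj1 hji).trans (hvol.trans ?_)
        rw [ENNReal.ofReal_add hq1 (mul_nonneg hq3 hq2), ENNReal.ofReal_mul hq3]
        rw [ENNReal.ofReal_natCast]
      exact (ENNReal.ofReal_le_ofReal_iff
        (by linarith [mul_nonneg hq3 hq2] : (0:ℝ) ≤ 4*(ρ j)^2 +
          (((S j).erase 0).card : ℝ) * (4 * ρ j * δ))).mp hvol2
    -- division step
    have hdiv : ∀ j, 1 ≤ j → j ≤ i →
        (SLB.vK i j - 4*(ρ j)^2) / (4 * ρ j) ≤ (((S j).erase 0).card : ℝ) * δ := by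
      intro j hj1 hji
      rw [div_le_iff₀ (by linarith [hρpos j])]
      have := hreg j hj1 hji
      nlinarith [hρpos j]
    -- disjointness of the index sets
    have hdisj : ∀ j, 1 ≤ j → j ≤ i → ∀ l, 1 ≤ l → l ≤ i → j ≠ l →
        Disjoint (S j) (S l) := by
      intro j hj1 hji l hl1 hli hjl
      rw [Finset.disjoint_left]
      intro k hkj hkl
      obtain ⟨p, hp, hp0, hp1⟩ := (Finset.mem_filter.mp hkj).2
      obtain ⟨q, hq, hq0, hq1⟩ := (Finset.mem_filter.mp hkl).2
      have hd0 : |p 0 - q 0| ≤ ρ j + ρ l := by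
        calc |p 0 - q 0| ≤ |p 0 - c k 0| + |c k 0 - q 0| := by
              have := abs_sub_le (p 0) (c k 0) (q 0); linarith
          _ ≤ ρ j + ρ l := by rw [abs_sub_comm (p 0)]; exact add_le_add hp0 hq0
      have hd1 : |p 1 - q 1| ≤ ρ j + ρ l := by
        calc |p 1 - q 1| ≤ |p 1 - c k 1| + |c k 1 - q 1| := by
              have := abs_sub_le (p 1) (c k 1) (q 1); linarith
          _ ≤ ρ j + ρ l := by rw [abs_sub_comm (p 1)]; exact add_le_add hp1 hq1
      have hsep : (3/2) * (SLB.rr i j + SLB.rr i l) ≤ ρ j + ρ l := by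
        rcases lt_or_gt_of_ne hjl with h | h
        · have := SLB.KK_sep i l j hj1 h q p hq hp
          rw [abs_sub_comm (q 0), abs_sub_comm (q 1)] at this
          calc (3/2) * (SLB.rr i j + SLB.rr i l) = (3/2) * (SLB.rr i l + SLB.rr i j) := by ring
            _ ≤ max |p 0 - q 0| |p 1 - q 1| := this
            _ ≤ ρ j + ρ l := max_le hd0 hd1
        · have := SLB.KK_sep i j l hl1 h p q hp hq
          calc (3/2) * (SLB.rr i j + SLB.rr i l) ≤ max |p 0 - q 0| |p 1 - q 1| := this
            _ ≤ ρ j + ρ l := max_le hd0 hd1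
      -- contradiction: rr i 1 ≤ 2δ ≤ 2δ₀ but rr i 1 = A⁻¹ and δ₀ = A⁻¹A⁻¹, A ≥ 4
      have hrj := SLB.rr_mono i j hj1
      have hrl := SLB.rr_mono i l hl1
      have hδδ₀ : δ ≤ δ₀ := hδle
      have hr1 : SLB.rr i 1 * (4:ℝ)^(i:ℕ) = 1 := SLB.rr_one i
      have hA4' : (4:ℝ) ≤ (4:ℝ)^(i:ℕ) := SLB.hA4 i hi
      have hrr1pos := SLB.rr_pos i 1
      -- from hsep: (1/2)(rr j + rr l) ≤ 2δ hence rr i 1 ≤ 2δ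
      have h2δ : SLB.rr i 1 ≤ 2*δ := by
        simp only [hρ] at hsep
        linarith
      -- δ ≤ δ₀ = (A⁻¹)² hence 2δ·A ≤ 2/A ≤ 1/2 < 1 = rr i 1 · A
      have : SLB.rr i 1 * (4:ℝ)^(i:ℕ) ≤ 2*δ₀ * (4:ℝ)^(i:ℕ) := by
        apply mul_le_mul_of_nonneg_right (by linarith) hApos'.le
      rw [hr1, hδ₀def] at this
      have hcontra : (1:ℝ) ≤ 2 * ((4:ℝ)^(i:ℕ))⁻¹ := by
        have hinv : ((4:ℝ)^(i:ℕ))⁻¹ * (4:ℝ)^(i:ℕ) = 1 := by field_simp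
        nlinarith [this]
      have : ((4:ℝ)^(i:ℕ))⁻¹ ≤ 1/4 := by
        rw [show (1/4:ℝ) = (4:ℝ)⁻¹ by norm_num]
        exact inv_anti₀ (by norm_num) hA4'
      linarith
    -- sum of cardinalities
    have hcards : ∑ j ∈ Finset.Icc 1 i, ((((S j).erase 0).card) : ℝ) ≤ (n:ℝ) := by
      have hnat : ∑ j ∈ Finset.Icc 1 i, ((S j).erase 0).card ≤ n := by
        calc ∑ j ∈ Finset.Icc 1 i, ((S j).erase 0).card
            ≤ ∑ j ∈ Finset.Icc 1 i, (S j).card :=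
              Finset.sum_le_sum fun j _ => Finset.card_le_card (Finset.erase_subset _ _)
          _ = ((Finset.Icc 1 i).biUnion S).card := by
              rw [Finset.card_biUnion]
              intro j hj l hl hjl
              simp only [Finset.mem_coe, Finset.mem_Icc] at hj hl
              exact hdisj j hj.1 hj.2 l hl.1 hl.2 hjl
          _ ≤ (Finset.range n).card := by
              apply Finset.card_le_card
              intro k hk
              obtain ⟨j, hj, hkj⟩ := Finset.mem_biUnion.mp hk
              exact (Finset.mem_filter.mp hkj).1
          _ = n := Finset.card_range n
      calc ∑ j ∈ Finset.Icc 1 i, ((((S j).erase 0).card) : ℝ)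
          = ((∑ j ∈ Finset.Icc 1 i, ((S j).erase 0).card : ℕ) : ℝ) := by
            rw [Nat.cast_sum]
        _ ≤ (n:ℝ) := by exact_mod_cast hnat
    -- the chain
    have hchain : ∑ j ∈ Finset.Icc 1 i, (SLB.vK i j - 4*(ρ j)^2) / (4 * ρ j) ≤ x := by
      calc ∑ j ∈ Finset.Icc 1 i, (SLB.vK i j - 4*(ρ j)^2) / (4 * ρ j)
          ≤ ∑ j ∈ Finset.Icc 1 i, (((S j).erase 0).card : ℝ) * δ := by
            apply Finset.sum_le_sum
            intro j hj
            simp only [Finset.mem_Icc] at hj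
            exact hdiv j hj.1 hj.2
        _ = (∑ j ∈ Finset.Icc 1 i, (((S j).erase 0).card : ℝ)) * δ := by
            rw [Finset.sum_mul]
        _ ≤ (n:ℝ) * δ := mul_le_mul_of_nonneg_right hcards hδ0
        _ = x := hnδ
    have hnum := SLB.numeric_main i hi δ hδ0 hδle
    refine hnum.trans ?_
    refine le_trans (le_of_eq ?_) hchain
    apply Finset.sum_congr rfl
    intro j _
    simp only [hρ]
  constructor
  · rw [hzpow]; linarith
  · rw [hpow]; linarith
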